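/- For any z ∈ (0, 1/2], q ≥ 1, and δ > 0 satisfying δ(1-z)^{(1-2q)/q} = z^{(1-2q)/q}, one has (1 - 1/q)(δ(1-z)^{1/q} - z^{1/q}) - (1/q)z^{(1-q)/q} + 1 ≥ 0. -/

import Mathlib

/-- For z ∈ (0,1/2], q ≥ 1, δ > 0 with δ(1-z)^{(1-2q)/q} = z^{(1-2q)/q}:
(1-1/q)(δ(1-z)^{1/q} - z^{1/q}) - (1/q)z^{(1-q)/q} + 1 ≥ 0. -/
theorem stmt9 (q δ z : ℝ) (hq : 1 ≤ q) (hz : z ∈ Set.Ioc (0:ℝ) (1/2)) (hδ : 0 < δ)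
    (h : δ * (1-z) ^ ((1-2*q)/q) = z ^ ((1-2*q)/q)) :
    0 ≤ (1 - 1/q) * (δ * (1-z) ^ (1/q) - z ^ (1/q)) - (1/q) * z ^ ((1-q)/q) + 1 := by
  obtain ⟨hz0, hz2⟩ := hz
  have hq0 : (0:ℝ) < q := lt_of_lt_of_le one_pos hq
  have hz1 : z < 1 := lt_of_le_of_lt hz2 (by norm_num)
  have h1z : (0:ℝ) < 1 - z := by linarith
  -- rewrite (1-z)^(1/q)
  have e1 : (1-z) ^ (1/q) = (1-z) ^ ((1-2*q)/q) * (1-z)^2 := by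
    rw [← Real.rpow_two, ← Real.rpow_add h1z]
    congr 1
    field_simp
    ring
  -- rewrite z powers in terms of t = z^(1/q)
  have e2 : z ^ ((1-2*q)/q) = z ^ (1/q) / z^2 := by
    rw [← Real.rpow_two, ← Real.rpow_sub hz0]
    congr 1
    field_simp
  have e3 : z ^ ((1-q)/q) = z ^ (1/q) / z := by
    have hh : (1:ℝ)/q = (1-q)/q + 1 := by field_simp; ring
    rw [hh, Real.rpow_add hz0, Real.rpow_one, mul_div_assoc, div_self (ne_of_gt hz0), mul_one]
  set t := z ^ (1/q) with ht
  have ht0 : 0 < t := Real.rpow_pos_of_pos hz0 _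
  -- Bernoulli: t ≤ 1 + (1/q)*(z-1)
  have htb : t ≤ 1 + (1/q) * (z - 1) := by
    have := rpow_one_add_le_one_add_mul_self (s := z - 1) (p := 1/q)
      (by linarith) (by positivity) (by rw [div_le_one hq0]; linarith)
    simpa [ht, one_div] using this
  -- express δ*(1-z)^(1/q)
  have e4 : δ * (1-z) ^ (1/q) = t / z^2 * (1-z)^2 := by
    rw [e1, ← mul_assoc, h, e2]
  rw [e4, e3]
  have hzq : t * q ≤ q - (1 - z) := by
    have := mul_le_mul_of_nonneg_right htb (le_of_lt hq0)
    calc t * q ≤ (1 + (1/q) * (z-1)) * q := this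
      _ = q - (1 - z) := by field_simp; ring
  have hz2' : (0:ℝ) < z^2 := by positivity
  have key : 0 ≤ q^2 * z^2 + (t*q) * ((q-1)*(1-2*z) - z) := by
    rcases le_or_gt 0 ((q-1)*(1-2*z) - z) with hC | hC
    · have : 0 ≤ (t*q) * ((q-1)*(1-2*z) - z) :=
        mul_nonneg (by positivity) hC
      nlinarith
    · have hA : 0 ≤ q - 1 + z := by linarith
      have h2 : (t*q) * ((q-1)*(1-2*z) - z) ≥ (q - (1-z)) * ((q-1)*(1-2*z) - z) := by
        apply mul_le_mul_of_nonpos_right hzq (le_of_lt hC)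
      nlinarith [sq_nonneg ((q-1+z) - ((1-z) - q*(1-2*z)))]
  -- now reduce goal to key
  have hexp : ((1 - 1/q) * (t / z^2 * (1-z)^2 - t) - (1/q) * (t / z) + 1) * (q^2 * z^2)
      = q^2*z^2 + (t*q)*((q-1)*(1-2*z) - z) := by
    field_simp
    ring
  have hqz : 0 < q^2 * z^2 := by positivity
  have hnn : 0 ≤ ((1 - 1/q) * (t / z^2 * (1-z)^2 - t) - (1/q) * (t / z) + 1) * (q^2 * z^2) :=
    hexp ▸ key
  exact nonneg_of_mul_nonneg_right (by rwa [mul_comm] at hnn) hqz
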